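/- (Proposition 1, covariance form.) Let μ be the independent Bernoulli selection model with parameters p : Fin N → [0,1], let G ⊆ Fin N, f a monotone set function on subsets of G with f(∅) = 0 and marginal gains 0 ≤ Δ_j(T) ≤ δ̄_j, and let j ∈ G. Then 0 ≤ Cov_μ(f(Z ∩ G), z_j) ≤ p_j(1 − p_j)·δ̄_j·μ(ℰ_j). -/

import Mathlib

open Finset

namespace LongRLVR

/-- Real-valued indicator that chunk `j` belongs to the selection `Z`. -/
noncomputable def ind {N : ℕ} (Z : Fin N → Bool) (j : Fin N) : ℝ := if Z j then 1 else 0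

/-- Expectation of `X` under the finitely supported distribution `μ` on selections. -/
noncomputable def expec {N : ℕ} (μ X : (Fin N → Bool) → ℝ) : ℝ := ∑ Z, μ Z * X Z

/-- Covariance of `X` and `Y` under `μ`. -/
noncomputable def cov {N : ℕ} (μ X Y : (Fin N → Bool) → ℝ) : ℝ :=
  expec μ (fun Z => X Z * Y Z) - expec μ X * expec μ Y

/-- Unnormalized log-linear weight `exp(∑ k, s k * z k + ψ Z)`. -/
noncomputable def wt {N : ℕ} (s : Fin N → ℝ) (ψ : (Fin N → Bool) → ℝ)
    (Z : Fin N → Bool) : ℝ :=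
  Real.exp ((∑ k, s k * ind Z k) + ψ Z)

/-- The log-linear policy `π_s` with potential `ψ`. -/
noncomputable def pol {N : ℕ} (s : Fin N → ℝ) (ψ : (Fin N → Bool) → ℝ)
    (Z : Fin N → Bool) : ℝ :=
  wt s ψ Z / ∑ Z', wt s ψ Z'

/-- Marginal selection probability `p_j(s) = E_{π_s}[z_j]`. -/
noncomputable def pmarg {N : ℕ} (s : Fin N → ℝ) (ψ : (Fin N → Bool) → ℝ) (j : Fin N) : ℝ :=
  expec (pol s ψ) (fun Z => ind Z j)

open Classical in
/-- Probability of the event `A` under `μ`. -/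
noncomputable def probEvent {N : ℕ} (μ : (Fin N → Bool) → ℝ)
    (A : (Fin N → Bool) → Prop) : ℝ :=
  ∑ Z, if A Z then μ Z else 0

open Classical in
/-- Conditional expectation `E_μ[X | A] = E_μ[X · 1_A] / μ(A)`. -/
noncomputable def condExp {N : ℕ} (μ X : (Fin N → Bool) → ℝ)
    (A : (Fin N → Bool) → Prop) : ℝ :=
  (∑ Z, if A Z then μ Z * X Z else 0) / probEvent μ A

/-- The independent Bernoulli selection model with parameters `p`. -/
noncomputable def bern {N : ℕ} (p : Fin N → ℝ) (Z : Fin N → Bool) : ℝ :=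
  ∏ k, if Z k then p k else 1 - p k

/-- Logistic sigmoid. -/
noncomputable def sigmoid (x : ℝ) : ℝ := 1 / (1 + Real.exp (-x))

/-- The subset of `Fin N` corresponding to the selection `Z`. -/
def toFin {N : ℕ} (Z : Fin N → Bool) : Finset (Fin N) :=
  Finset.univ.filter (fun k => Z k = true)


/-- Proposition 1, covariance form:
`0 ≤ Cov_μ(f(Z ∩ G), z_j) ≤ p_j (1 − p_j) δ̄_j μ(ℰ_j)`. -/
lemma sum_split_aux {N : ℕ} (j : Fin N) (g : (Fin N → Bool) → ℝ) :
    ∑ Z, g Z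
      = ∑ W ∈ Finset.univ.filter (fun Z : Fin N → Bool => Z j = false),
          (g W + g (Function.update W j true)) := by
  classical
  rw [Finset.sum_add_distrib,
    ← Finset.sum_filter_add_sum_filter_not Finset.univ
      (fun Z : Fin N → Bool => Z j = false) g]
  congr 1
  refine Finset.sum_bij' (fun Z _ => Function.update Z j false)
    (fun W _ => Function.update W j true) ?_ ?_ ?_ ?_ ?_
  · intro a ha; simp
  · intro b hb; simp
  · intro a ha; simp at ha
    funext k; by_cases hk : k = j <;> simp [hk, Function.update, ha]
  · intro b hb; simp at hb
    funext k; by_cases hk : k = j <;> simp [hk, Function.update, hb]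
  · intro a ha; simp at ha
    congr 1
    funext k; by_cases hk : k = j <;> simp [hk, Function.update, ha]

lemma bern_factor {N : ℕ} (p : Fin N → ℝ) (j : Fin N) (W : Fin N → Bool) (hW : W j = false) :
    bern p W = (1 - p j) * ∏ k ∈ Finset.univ.erase j, (if W k then p k else 1 - p k) ∧
    bern p (Function.update W j true)
      = p j * ∏ k ∈ Finset.univ.erase j, (if W k then p k else 1 - p k) := by
  constructor
  · rw [bern, ← Finset.mul_prod_erase Finset.univ _ (Finset.mem_univ j), hW]
    simp
  · rw [bern, ← Finset.mul_prod_erase Finset.univ _ (Finset.mem_univ j)]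
    simp only [Function.update_self, if_true]
    congr 1
    refine Finset.prod_congr rfl fun k hk => ?_
    rw [Function.update_of_ne (Finset.ne_of_mem_erase hk)]

lemma toFin_update {N : ℕ} (j : Fin N) (G : Finset (Fin N)) (hj : j ∈ G)
    (W : Fin N → Bool) :
    toFin (Function.update W j true) ∩ G = insert j (toFin W ∩ G) := by
  ext k
  by_cases hk : k = j <;> simp [toFin, Function.update, hk, hj]

lemma toFin_not_mem {N : ℕ} (j : Fin N) (G : Finset (Fin N)) (W : Fin N → Bool)
    (hW : W j = false) : j ∉ toFin W ∩ G := by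
  simp [toFin, hW]

lemma bern_norm {N : ℕ} (p : Fin N → ℝ) :
    ∑ Z : Fin N → Bool, bern p Z = 1 := by
  classical
  have h := Finset.prod_univ_sum (fun _ : Fin N => (Finset.univ : Finset Bool))
    (fun k b => if b then p k else 1 - p k)
  rw [Fintype.piFinset_univ] at h
  simp only [bern]
  rw [← h]
  simp

theorem stmt8 (N : ℕ) (p : Fin N → ℝ) (hp : ∀ k, 0 ≤ p k ∧ p k ≤ 1)
    (G : Finset (Fin N)) (f : Finset (Fin N) → ℝ) (hf0 : f ∅ = 0)
    (hmono : ∀ S T : Finset (Fin N), S ⊆ T → T ⊆ G → f S ≤ f T)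
    (j : Fin N) (hj : j ∈ G) (δb : ℝ) (hδb : 0 < δb)
    (hΔ : ∀ T : Finset (Fin N), T ⊆ G.erase j →
      0 ≤ f (insert j T) - f T ∧ f (insert j T) - f T ≤ δb) :
    0 ≤ cov (bern p) (fun Z => f (toFin Z ∩ G)) (fun Z => ind Z j) ∧
    cov (bern p) (fun Z => f (toFin Z ∩ G)) (fun Z => ind Z j)
      ≤ p j * (1 - p j) * δb * probEvent (bern p)
          (fun Z => 0 < f (insert j ((toFin Z ∩ G).erase j)) - f ((toFin Z ∩ G).erase j)) := by
  classical
  set S0 : Finset (Fin N → Bool) :=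
    Finset.univ.filter (fun Z : Fin N → Bool => Z j = false) with hS0def
  set r : (Fin N → Bool) → ℝ :=
    fun W => ∏ k ∈ Finset.univ.erase j, (if W k then p k else 1 - p k) with hrdef
  have hmemS0 : ∀ W ∈ S0, W j = false := by
    intro W hW; simpa [hS0def] using hW
  have hr0 : ∀ W, 0 ≤ r W := by
    intro W
    refine Finset.prod_nonneg fun k _ => ?_
    by_cases h : W k
    · simpa [h] using (hp k).1
    · simpa [h] using sub_nonneg.mpr (hp k).2
  -- per-W facts
  have hTsub : ∀ W ∈ S0, toFin W ∩ G ⊆ G.erase j := by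
    intro W hW
    exact Finset.subset_erase.mpr ⟨Finset.inter_subset_right, toFin_not_mem j G W (hmemS0 W hW)⟩
  have hE0 : ∀ W ∈ S0, (toFin W ∩ G).erase j = toFin W ∩ G := by
    intro W hW
    exact Finset.erase_eq_of_notMem (toFin_not_mem j G W (hmemS0 W hW))
  have hE1 : ∀ W ∈ S0, (toFin (Function.update W j true) ∩ G).erase j = toFin W ∩ G := by
    intro W hW
    rw [toFin_update j G hj]
    exact Finset.erase_insert (toFin_not_mem j G W (hmemS0 W hW))
  -- the four sums
  have h1 : expec (bern p) (fun Z => f (toFin Z ∩ G) * ind Z j)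
      = p j * ∑ W ∈ S0, r W * f (insert j (toFin W ∩ G)) := by
    rw [expec, sum_split_aux j, Finset.mul_sum]
    refine Finset.sum_congr rfl fun W hW => ?_
    have hWj := hmemS0 W hW
    rw [(bern_factor p j W hWj).1, (bern_factor p j W hWj).2, toFin_update j G hj]
    simp [ind, hWj]
    ring
  have h2 : expec (bern p) (fun Z => f (toFin Z ∩ G))
      = (1 - p j) * (∑ W ∈ S0, r W * f (toFin W ∩ G))
        + p j * ∑ W ∈ S0, r W * f (insert j (toFin W ∩ G)) := by
    rw [expec, sum_split_aux j, Finset.mul_sum, Finset.mul_sum, ← Finset.sum_add_distrib]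
    refine Finset.sum_congr rfl fun W hW => ?_
    have hWj := hmemS0 W hW
    rw [(bern_factor p j W hWj).1, (bern_factor p j W hWj).2, toFin_update j G hj]
    ring
  have hRnorm : ∑ W ∈ S0, r W = 1 := by
    have := bern_norm p
    rw [sum_split_aux j (bern p)] at this
    rw [← this]
    refine Finset.sum_congr rfl fun W hW => ?_
    have hWj := hmemS0 W hW
    rw [(bern_factor p j W hWj).1, (bern_factor p j W hWj).2]
    ring
  have h3 : expec (bern p) (fun Z => ind Z j) = p j := by
    rw [expec, sum_split_aux j]
    have : ∀ W ∈ S0, bern p W * ind W j + bern p (Function.update W j true)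
        * ind (Function.update W j true) j = p j * r W := by
      intro W hW
      have hWj := hmemS0 W hW
      rw [(bern_factor p j W hWj).1, (bern_factor p j W hWj).2]
      simp [ind, hWj]
      exact Or.inl rfl
    rw [Finset.sum_congr rfl this, ← Finset.mul_sum, hRnorm, mul_one]
  have h4 : probEvent (bern p)
        (fun Z => 0 < f (insert j ((toFin Z ∩ G).erase j)) - f ((toFin Z ∩ G).erase j))
      = ∑ W ∈ S0, (if 0 < f (insert j (toFin W ∩ G)) - f (toFin W ∩ G) then r W else 0) := by
    rw [probEvent, sum_split_aux j]
    refine Finset.sum_congr rfl fun W hW => ?_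
    have hWj := hmemS0 W hW
    rw [hE0 W hW, hE1 W hW, (bern_factor p j W hWj).1, (bern_factor p j W hWj).2]
    split_ifs <;> ring
  -- covariance in closed form
  have hcov : cov (bern p) (fun Z => f (toFin Z ∩ G)) (fun Z => ind Z j)
      = p j * (1 - p j)
        * ∑ W ∈ S0, r W * (f (insert j (toFin W ∩ G)) - f (toFin W ∩ G)) := by
    have hAB : ∑ W ∈ S0, r W * (f (insert j (toFin W ∩ G)) - f (toFin W ∩ G))
        = (∑ W ∈ S0, r W * f (insert j (toFin W ∩ G))) - ∑ W ∈ S0, r W * f (toFin W ∩ G) := by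
      rw [← Finset.sum_sub_distrib]
      exact Finset.sum_congr rfl fun W _ => by ring
    rw [cov, h1, h2, h3, hAB]
    ring
  have hCnn : 0 ≤ ∑ W ∈ S0, r W * (f (insert j (toFin W ∩ G)) - f (toFin W ∩ G)) := by
    refine Finset.sum_nonneg fun W hW => ?_
    exact mul_nonneg (hr0 W) (hΔ _ (hTsub W hW)).1
  have hCle : (∑ W ∈ S0, r W * (f (insert j (toFin W ∩ G)) - f (toFin W ∩ G)))
      ≤ δb * ∑ W ∈ S0, (if 0 < f (insert j (toFin W ∩ G)) - f (toFin W ∩ G) then r W else 0) := by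
    rw [Finset.mul_sum]
    refine Finset.sum_le_sum fun W hW => ?_
    have hb := hΔ _ (hTsub W hW)
    by_cases hc : 0 < f (insert j (toFin W ∩ G)) - f (toFin W ∩ G)
    · simp only [hc, if_true]
      rw [mul_comm (r W)]
      exact mul_le_mul_of_nonneg_right hb.2 (hr0 W)
    · have : f (insert j (toFin W ∩ G)) - f (toFin W ∩ G) = 0 := le_antisymm (not_lt.mp hc) hb.1
      simp [this]
  have hpj := hp j
  have hq0 : 0 ≤ p j * (1 - p j) := mul_nonneg hpj.1 (sub_nonneg.mpr hpj.2)
  constructor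
  · rw [hcov]
    exact mul_nonneg hq0 hCnn
  · rw [hcov, h4]
    calc p j * (1 - p j) * ∑ W ∈ S0, r W * (f (insert j (toFin W ∩ G)) - f (toFin W ∩ G))
        ≤ p j * (1 - p j) * (δb * ∑ W ∈ S0,
            (if 0 < f (insert j (toFin W ∩ G)) - f (toFin W ∩ G) then r W else 0)) :=
          mul_le_mul_of_nonneg_left hCle hq0
      _ = p j * (1 - p j) * δb * ∑ W ∈ S0,
            (if 0 < f (insert j (toFin W ∩ G)) - f (toFin W ∩ G) then r W else 0) := by ring


end LongRLVR
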